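/- Let K = (I + iσ_x)/√2 and H the Hadamard matrix on C². Let ρ_y = (1/3)(|y⟩⟨y| + H|y⟩⟨y|H + K|y⟩⟨y|K†) for y ∈ {0,1}. Then ½(1 + ‖½ρ₀ − ½ρ₁‖₁) = ½ + 1/(2√3). -/

import Mathlib

open Matrix
open scoped ComplexOrder

/-- The square root of a positive semidefinite matrix, as defined in Mathlib (Dec 2024). -/
noncomputable def Matrix.PosSemidef.sqrt {n : Type*} [Fintype n] [DecidableEq n]
    {A : Matrix n n ℂ} (hA : A.PosSemidef) : Matrix n n ℂ :=
  (hA.1.eigenvectorUnitary : Matrix n n ℂ) *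
    diagonal (((↑) : ℝ → ℂ) ∘ (√·) ∘ hA.1.eigenvalues) *
    (star hA.1.eigenvectorUnitary : Matrix n n ℂ)

/-- The trace norm `‖A‖₁ = Tr √(AᴴA)`. -/
noncomputable def traceNorm {ι : Type*} [Fintype ι] [DecidableEq ι]
    (A : Matrix ι ι ℂ) : ℝ :=
  ((Matrix.posSemidef_conjTranspose_mul_self A).sqrt.trace).re

/-- The Hadamard matrix `H = (σₓ + σ_z)/√2`. -/
noncomputable def Had : Matrix (Fin 2) (Fin 2) ℂ :=
  ((Real.sqrt 2 : ℂ))⁻¹ • !![1, 1; 1, -1]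

/-- `K = (I + i σₓ)/√2`. -/
noncomputable def Km : Matrix (Fin 2) (Fin 2) ℂ :=
  ((Real.sqrt 2 : ℂ))⁻¹ • (1 + Complex.I • !![0, 1; 1, 0])

/-- `ρ_y = (1/3)(|y⟩⟨y| + H|y⟩⟨y|H + K|y⟩⟨y|K†)`. -/
noncomputable def rho3 (y : Fin 2) : Matrix (Fin 2) (Fin 2) ℂ :=
  (1/3 : ℂ) • (Matrix.single y y 1
    + Had * Matrix.single y y 1 * Had
    + Km * Matrix.single y y 1 * Kmᴴ)

set_option maxHeartbeats 1000000 in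
lemma rho_diff : (1/2 : ℂ) • rho3 0 - (1/2 : ℂ) • rho3 1
    = (6:ℂ)⁻¹ • !![1, 1 - Complex.I; 1 + Complex.I, -1] := by
  have h2 : (Real.sqrt 2 : ℂ) ≠ 0 := by
    simp [Complex.ofReal_ne_zero, Real.sqrt_ne_zero']
  have hs : ((Real.sqrt 2 : ℂ))⁻¹ * ((Real.sqrt 2 : ℂ))⁻¹ = 2⁻¹ := by
    rw [← mul_inv, ← Complex.ofReal_mul, Real.mul_self_sqrt (by norm_num)]
    norm_num
  have hstd0 : Matrix.single (0 : Fin 2) 0 (1:ℂ) = !![1,0;0,0] := by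
    ext i j; fin_cases i <;> fin_cases j <;> simp [Matrix.single]
  have hstd1 : Matrix.single (1 : Fin 2) 1 (1:ℂ) = !![0,0;0,1] := by
    ext i j; fin_cases i <;> fin_cases j <;> simp [Matrix.single]
  ext i j
  fin_cases i <;> fin_cases j <;>
    simp [rho3, Had, Km, hstd0, hstd1, Matrix.mul_apply, Fin.sum_univ_two,
      Matrix.one_apply] <;>
    field_simp <;>
    ring_nf <;>
    rw [show ((Real.sqrt 2 : ℂ))^2 = 2 by
      rw [sq, ← Complex.ofReal_mul, Real.mul_self_sqrt (by norm_num)]; norm_num] <;>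
    ring_nf <;> norm_num [Complex.I_sq]

set_option maxHeartbeats 800000 in
lemma key_prod :
    ((1/2 : ℂ) • rho3 0 - (1/2 : ℂ) • rho3 1)ᴴ *
      ((1/2 : ℂ) • rho3 0 - (1/2 : ℂ) • rho3 1)
      = Matrix.diagonal (fun _ : Fin 2 => ((12 : ℂ))⁻¹) := by
  rw [rho_diff]
  ext i j
  fin_cases i <;> fin_cases j <;>
    simp [Matrix.mul_apply, Matrix.conjTranspose_apply, Fin.sum_univ_two,
      Matrix.diagonal, Complex.ext_iff] <;>
    norm_num [Complex.ext_iff]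

lemma sqrt_diag_const {n : Type*} [Fintype n] [DecidableEq n] (A : Matrix n n ℂ)
    (hA : A.PosSemidef) (r : ℝ) (hr : 0 ≤ r) (hAeq : A = diagonal (fun _ : n => (r : ℂ))) :
    hA.sqrt = diagonal (fun _ : n => ((Real.sqrt r : ℝ) : ℂ)) := by
  have hs := hA.1.spectral_theorem
  rw [Unitary.conjStarAlgAut_apply] at hs
  have hU1 : star (hA.1.eigenvectorUnitary : Matrix n n ℂ) * hA.1.eigenvectorUnitary = 1 :=
    Unitary.coe_star_mul_self _
  have hU2 : (hA.1.eigenvectorUnitary : Matrix n n ℂ) * star (hA.1.eigenvectorUnitary : Matrix n n ℂ) = 1 :=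
    Unitary.coe_mul_star_self _
  have hdc : diagonal (fun _ : n => (r : ℂ)) = (r : ℂ) • (1 : Matrix n n ℂ) := by
    ext i j; simp [diagonal, one_apply]
  have hD : diagonal (RCLike.ofReal ∘ hA.1.eigenvalues) = diagonal (fun _ : n => (r : ℂ)) := by
    calc diagonal (RCLike.ofReal ∘ hA.1.eigenvalues)
        = star (hA.1.eigenvectorUnitary : Matrix n n ℂ) *
          ((hA.1.eigenvectorUnitary : Matrix n n ℂ) * diagonal (RCLike.ofReal ∘ hA.1.eigenvalues)
            * star (hA.1.eigenvectorUnitary : Matrix n n ℂ)) * (hA.1.eigenvectorUnitary : Matrix n n ℂ) := by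
          simp only [Matrix.mul_assoc, hU1, Matrix.mul_one]
          rw [← Matrix.mul_assoc, hU1, Matrix.one_mul]
      _ = diagonal (fun _ : n => (r : ℂ)) := by
          rw [hs.symm.trans hAeq, hdc, Matrix.mul_smul, Matrix.mul_one, Matrix.smul_mul, hU1]
  have hev : ∀ i, hA.1.eigenvalues i = r := fun i => by
    have := congrFun (congrFun hD i) i
    simpa using this
  unfold Matrix.PosSemidef.sqrt
  have hd2 : diagonal (((↑) : ℝ → ℂ) ∘ (√·) ∘ hA.1.eigenvalues)
      = ((Real.sqrt r : ℝ) : ℂ) • (1 : Matrix n n ℂ) := by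
    ext i j; simp [diagonal, one_apply, hev]
  rw [hd2, Matrix.mul_smul, Matrix.mul_one, Matrix.smul_mul, hU2]
  ext i j; simp [diagonal, one_apply]

/-- The Helstrom success probability for a bit encoded in a uniformly random
one of the three mutually unbiased bases `{I, H, K}` equals `½ + 1/(2√3)`. -/
theorem helstrom_three_mubs_one_qubit :
    (1/2 : ℝ) * (1 + traceNorm ((1/2 : ℂ) • rho3 0 - (1/2 : ℂ) • rho3 1))
      = 1/2 + 1/(2 * Real.sqrt 3) := by
  have h3 : (0:ℝ) < Real.sqrt 3 := Real.sqrt_pos.mpr (by norm_num)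
  set c : ℝ := (2 * Real.sqrt 3)⁻¹ with hc
  have hc0 : 0 ≤ c := by positivity
  have hS : Matrix.PosSemidef (Matrix.diagonal (fun _ : Fin 2 => (c : ℂ))) := by
    refine Matrix.posSemidef_diagonal_iff.mpr fun i => ?_
    exact_mod_cast Complex.zero_le_real.mpr hc0
  have hsq : (Matrix.diagonal (fun _ : Fin 2 => (c : ℂ))) ^ 2
      = ((1/2 : ℂ) • rho3 0 - (1/2 : ℂ) • rho3 1)ᴴ *
        ((1/2 : ℂ) • rho3 0 - (1/2 : ℂ) • rho3 1) := by
    rw [key_prod, sq, Matrix.diagonal_mul_diagonal]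
    congr 1
    funext i
    have h1 : (c : ℂ) * c = ((c * c : ℝ) : ℂ) := by push_cast; ring
    have h2 : c * c = 12⁻¹ := by
      rw [hc, ← mul_inv,
        show (2*Real.sqrt 3)*(2*Real.sqrt 3) = 4 * (Real.sqrt 3 * Real.sqrt 3) by ring,
        Real.mul_self_sqrt (by norm_num)]
      norm_num
    rw [h1, h2]; norm_num
  have hsqrt : (Matrix.posSemidef_conjTranspose_mul_self
      ((1/2 : ℂ) • rho3 0 - (1/2 : ℂ) • rho3 1)).sqrt = diagonal (fun _ : Fin 2 => (c : ℂ)) := by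
    rw [sqrt_diag_const _ _ (c * c) (mul_nonneg hc0 hc0)
      (by rw [← hsq, sq, Matrix.diagonal_mul_diagonal]; push_cast; rfl),
      Real.sqrt_mul_self hc0]
  have htn : traceNorm ((1/2 : ℂ) • rho3 0 - (1/2 : ℂ) • rho3 1) = 2 * c := by
    rw [traceNorm, hsqrt]
    simp [Matrix.trace, Matrix.diag, Fin.sum_univ_two]
  rw [htn, hc]
  field_simp
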